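/- Let V be a nonzero finite-dimensional real inner product space and let u ∈ V with u ≠ 0. Then the set {Λ(u) : Λ a self-adjoint positive-definite linear endomorphism of V} contains an open neighborhood of u in V. -/

import Mathlib

open scoped RealInnerProductSpace

/-- Rank-one operator `x ↦ ⟪a, x⟫ • b`. -/
noncomputable def rankOneAux {V : Type*} [NormedAddCommGroup V] [InnerProductSpace ℝ V]
    (a b : V) : V →ₗ[ℝ] V where
  toFun x := ⟪a, x⟫ • b
  map_add' x y := by simp [inner_add_right, add_smul]
  map_smul' r x := by simp [real_inner_smul_right, smul_smul]

/-- For a nonzero vector `u` in a nonzero finite-dimensional real inner product space `V`,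
the set of images `Λ u` of `u` under all self-adjoint positive-definite linear endomorphisms
`Λ` of `V` contains an open neighborhood of `u`. -/
theorem image_of_positive_definite_operators_mem_nhds
    {V : Type*} [NormedAddCommGroup V] [InnerProductSpace ℝ V]
    [FiniteDimensional ℝ V] [Nontrivial V]
    (u : V) (hu : u ≠ 0) :
    {w : V | ∃ Λ : V →ₗ[ℝ] V,
        (∀ x y : V, ⟪Λ x, y⟫ = ⟪x, Λ y⟫) ∧
        (∀ x : V, x ≠ 0 → 0 < ⟪Λ x, x⟫) ∧
        Λ u = w} ∈ nhds u := by
  have hU : (0:ℝ) < ‖u‖ := norm_pos_iff.mpr hu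
  refine Filter.mem_of_superset (Metric.ball_mem_nhds u (by positivity : (0:ℝ) < ‖u‖/3)) ?_
  intro w hw
  set v : V := w - u with hv
  have hvnorm : ‖v‖ < ‖u‖ / 3 := by
    simpa [hv, dist_eq_norm] using hw
  set Λ : V →ₗ[ℝ] V :=
    LinearMap.id + (‖u‖^2)⁻¹ • (rankOneAux u v + rankOneAux v u)
      - (⟪v, u⟫ / ‖u‖^4) • rankOneAux u u with hΛ
  have hΛapp : ∀ x : V, Λ x = x + (‖u‖^2)⁻¹ • (⟪u, x⟫ • v + ⟪v, x⟫ • u)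
      - (⟪v, u⟫ / ‖u‖^4) • ⟪u, x⟫ • u := by
    intro x
    simp [hΛ, rankOneAux, LinearMap.sub_apply, LinearMap.add_apply, LinearMap.smul_apply]
  have hsymm : ∀ x y : V, ⟪Λ x, y⟫ = ⟪x, Λ y⟫ := by
    intro x y
    rw [hΛapp, hΛapp]
    simp only [inner_add_left, inner_add_right, inner_sub_left, inner_sub_right,
      real_inner_smul_left, real_inner_smul_right]
    rw [real_inner_comm x u, real_inner_comm x v, real_inner_comm y x]
    ring
  have hUsq : ‖u‖ ^ 2 ≠ 0 := by positivity
  refine ⟨Λ, hsymm, ?_, ?_⟩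
  · intro x hx
    have hX : (0:ℝ) < ‖x‖ := norm_pos_iff.mpr hx
    have h1 : |⟪u, x⟫| ≤ ‖u‖ * ‖x‖ := abs_real_inner_le_norm u x
    have h2 : |⟪v, x⟫| ≤ ‖v‖ * ‖x‖ := abs_real_inner_le_norm v x
    have h3 : |⟪v, u⟫| ≤ ‖v‖ * ‖u‖ := abs_real_inner_le_norm v u
    have hval : ⟪Λ x, x⟫ = ‖x‖^2 + (‖u‖^2)⁻¹ * (⟪u, x⟫ * ⟪v, x⟫ + ⟪v, x⟫ * ⟪u, x⟫)
        - (⟪v, u⟫ / ‖u‖^4) * (⟪u, x⟫ * ⟪u, x⟫) := by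
      rw [hΛapp]
      simp only [inner_add_left, inner_sub_left, real_inner_smul_left,
        real_inner_self_eq_norm_sq]
      try ring
    rw [hval]
    obtain ⟨h1l, h1r⟩ := abs_le.mp h1
    obtain ⟨h2l, h2r⟩ := abs_le.mp h2
    obtain ⟨h3l, h3r⟩ := abs_le.mp h3
    have hE : (0:ℝ) ≤ ‖v‖ := norm_nonneg v
    have hU4 : (0:ℝ) < ‖u‖^4 := by positivity
    have hab : -(‖u‖ * ‖v‖ * ‖x‖^2) ≤ ⟪u, x⟫ * ⟪v, x⟫ := by
      nlinarith [mul_nonneg (by linarith : (0:ℝ) ≤ ‖u‖ * ‖x‖ - ⟪u, x⟫)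
          (by linarith : (0:ℝ) ≤ ‖v‖ * ‖x‖ - ⟪v, x⟫),
        mul_nonneg (by linarith : (0:ℝ) ≤ ‖u‖ * ‖x‖ + ⟪u, x⟫)
          (by linarith : (0:ℝ) ≤ ‖v‖ * ‖x‖ + ⟪v, x⟫)]
    have ha2 : ⟪u, x⟫ * ⟪u, x⟫ ≤ ‖u‖^2 * ‖x‖^2 := by
      nlinarith [mul_nonneg (by linarith : (0:ℝ) ≤ ‖u‖ * ‖x‖ - ⟪u, x⟫)
          (by linarith : (0:ℝ) ≤ ‖u‖ * ‖x‖ + ⟪u, x⟫)]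
    have hsa : ⟪v, u⟫ * (⟪u, x⟫ * ⟪u, x⟫) ≤ ‖v‖ * ‖u‖ * (‖u‖^2 * ‖x‖^2) := by
      nlinarith [mul_self_nonneg ⟪u, x⟫, mul_nonneg hE hU.le]
    have hab2 := mul_le_mul_of_nonneg_right hab (sq_nonneg ‖u‖)
    have hmain : 0 < ‖x‖^2 * ‖u‖^4 + (⟪u, x⟫ * ⟪v, x⟫ + ⟪v, x⟫ * ⟪u, x⟫) * ‖u‖^2
        - ⟪v, u⟫ * (⟪u, x⟫ * ⟪u, x⟫) := by
      have hfinal : 0 < ‖u‖^3 * ‖x‖^2 * (‖u‖ - 3 * ‖v‖) :=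
        mul_pos (mul_pos (pow_pos hU 3) (by positivity)) (by linarith)
      nlinarith [hab2, hsa]
    have : ‖x‖^2 + (‖u‖^2)⁻¹ * (⟪u, x⟫ * ⟪v, x⟫ + ⟪v, x⟫ * ⟪u, x⟫)
        - (⟪v, u⟫ / ‖u‖^4) * (⟪u, x⟫ * ⟪u, x⟫)
        = (‖x‖^2 * ‖u‖^4 + (⟪u, x⟫ * ⟪v, x⟫ + ⟪v, x⟫ * ⟪u, x⟫) * ‖u‖^2
          - ⟪v, u⟫ * (⟪u, x⟫ * ⟪u, x⟫)) / ‖u‖^4 := by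
      field_simp
    rw [this]
    exact div_pos hmain hU4
  · rw [hΛapp, real_inner_self_eq_norm_sq, hv]
    match_scalars <;> (field_simp; try ring)
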